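/- Two nonempty strings x, y over Z_q (q ≥ 4 even) have a common descendant under reverse-complement duplications of length 1 if and only if they have the same signature: D₁*(x) ∩ D₁*(y) ≠ ∅ ⇔ σ(x) = σ(y). -/

import Mathlib

/-- One reverse-complement duplication of length `k`: a `k`-factor `v` of `x`
gets a reverse-complement copy inserted right after it. -/
def RCStep {q : ℕ} (bar : ZMod q → ZMod q) (k : ℕ) (x y : List (ZMod q)) : Prop :=
  ∃ u v w : List (ZMod q), v.length = k ∧ x = u ++ v ++ w ∧
    y = u ++ v ++ (v.map bar).reverse ++ w

/-- Finitely many (possibly zero) reverse-complement duplications of length `k`. -/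
def RCDerives {q : ℕ} (bar : ZMod q → ZMod q) (k : ℕ) :
    List (ZMod q) → List (ZMod q) → Prop :=
  Relation.ReflTransGen (RCStep bar k)

/-- The signature of a string: the sequence of leading letters of the minimal
decomposition into maximal blocks over `{a, bar a}`. -/
def signature {q : ℕ} (bar : ZMod q → ZMod q) : List (ZMod q) → List (ZMod q)
  | [] => []
  | a :: rest => a :: signature bar (rest.dropWhile (fun b => b == a || b == bar a))
  termination_by l => l.length
  decreasing_by
    simp only [List.length_cons]
    exact Nat.lt_succ_of_le ((List.dropWhile_sublist _).length_le)

section Aux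
variable {q : ℕ} (bar : ZMod q → ZMod q)

lemma sig_cons (a : ZMod q) (t : List (ZMod q)) :
    signature bar (a :: t) = a :: signature bar (t.dropWhile (fun b => b == a || b == bar a)) := by
  rw [signature]

lemma sig_cons_cons (a b : ZMod q) (t : List (ZMod q)) :
    signature bar (a :: b :: t) =
      if b = a ∨ b = bar a then signature bar (a :: t)
      else a :: signature bar (b :: t) := by
  by_cases h : b = a ∨ b = bar a
  · rw [if_pos h, sig_cons, sig_cons, List.dropWhile_cons,
      if_pos (by rcases h with h | h <;> simp [h])]
  · rw [if_neg h, sig_cons bar a (b :: t), List.dropWhile_cons,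
      if_neg (by simpa using h)]

lemma sig_nil_iff (l : List (ZMod q)) : signature bar l = [] ↔ l = [] := by
  cases l with
  | nil => simp [signature]
  | cons a t => rw [sig_cons]; simp

lemma sig_dup (c : ZMod q) (w : List (ZMod q)) :
    signature bar (c :: bar c :: w) = signature bar (c :: w) := by
  rw [sig_cons_cons, if_pos (Or.inr rfl)]

lemma sig_insert (hinv : Function.Involutive bar) (c : ZMod q) (w : List (ZMod q)) :
    ∀ (u : List (ZMod q)) (a : ZMod q),
      signature bar (a :: (u ++ c :: bar c :: w)) = signature bar (a :: (u ++ c :: w))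
  | [], a => by
    by_cases h : c = a ∨ c = bar a
    · have h' : bar c = a ∨ bar c = bar a := by
        rcases h with h | h
        · exact Or.inr (by rw [h])
        · exact Or.inl (by rw [h, hinv])
      simp only [List.nil_append]
      rw [sig_cons_cons, if_pos h, sig_cons_cons, if_pos h', sig_cons_cons, if_pos h]
    · simp only [List.nil_append]
      rw [sig_cons_cons bar a c, if_neg h, sig_cons_cons bar a c, if_neg h, sig_dup]
  | e :: u', a => by
    by_cases h : e = a ∨ e = bar a
    · simp only [List.cons_append]
      rw [sig_cons_cons, if_pos h, sig_cons_cons bar a e, if_pos h]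
      exact sig_insert hinv c w u' a
    · simp only [List.cons_append]
      rw [sig_cons_cons, if_neg h, sig_cons_cons bar a e, if_neg h]
      rw [sig_insert hinv c w u' e]

lemma sig_step (hinv : Function.Involutive bar) {x y : List (ZMod q)}
    (h : RCStep bar 1 x y) : signature bar x = signature bar y := by
  obtain ⟨u, v, w, hv, hx, hy⟩ := h
  obtain ⟨c, rfl⟩ := List.length_eq_one_iff.mp hv
  subst hx hy
  simp only [List.map_cons, List.map_nil, List.reverse_cons, List.reverse_nil,
    List.nil_append, List.append_assoc, List.singleton_append, List.cons_append,
    List.nil_append]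
  cases u with
  | nil => simp only [List.nil_append]; exact (sig_dup bar c w).symm
  | cons a u' => exact (sig_insert bar hinv c w u' a).symm

lemma sig_derives (hinv : Function.Involutive bar) {x y : List (ZMod q)}
    (h : RCDerives bar 1 x y) : signature bar x = signature bar y := by
  induction h with
  | refl => rfl
  | tail _ hstep ih => exact ih.trans (sig_step bar hinv hstep)

/-! ### Congruence -/

lemma rcstep_compat {x y : List (ZMod q)} (p s : List (ZMod q))
    (h : RCStep bar 1 x y) : RCStep bar 1 (p ++ x ++ s) (p ++ y ++ s) := by
  obtain ⟨u, v, w, hv, hx, hy⟩ := h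
  exact ⟨p ++ u, v, w ++ s, hv, by simp [hx], by simp [hy]⟩

lemma rcderives_compat {x y : List (ZMod q)} (p s : List (ZMod q))
    (h : RCDerives bar 1 x y) : RCDerives bar 1 (p ++ x ++ s) (p ++ y ++ s) :=
  Relation.ReflTransGen.lift (fun l => p ++ l ++ s) (fun _ _ h => rcstep_compat bar p s h) _ _ h

/-! ### Alternating strings -/

def alt (bar : ZMod q → ZMod q) : ZMod q → ℕ → List (ZMod q)
  | _, 0 => []
  | a, n + 1 => a :: alt bar (bar a) n

lemma alt_succ_eq (a : ZMod q) : ∀ n, alt bar a (n + 1) = alt bar a n ++ [bar^[n] a] := by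
  intro n
  induction n generalizing a with
  | zero => simp [alt]
  | succ n ih =>
    show a :: alt bar (bar a) (n + 1) = (a :: alt bar (bar a) n) ++ _
    rw [ih (bar a), Function.iterate_succ_apply]
    simp

lemma derives_alt_succ (a : ZMod q) (n : ℕ) :
    RCDerives bar 1 (alt bar a (n + 1)) (alt bar a (n + 2)) := by
  refine Relation.ReflTransGen.single ?_
  refine ⟨alt bar a n, [bar^[n] a], [], rfl, ?_, ?_⟩
  · rw [alt_succ_eq]; simp
  · rw [alt_succ_eq bar a (n+1), alt_succ_eq bar a n, Function.iterate_succ_apply']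
    simp

lemma derives_alt_le (a : ZMod q) {n m : ℕ} (h1 : 1 ≤ n) (h : n ≤ m) :
    RCDerives bar 1 (alt bar a n) (alt bar a m) := by
  induction m, h using Nat.le_induction with
  | base => exact Relation.ReflTransGen.refl
  | succ m hm ih =>
    refine ih.trans ?_
    obtain ⟨k, rfl⟩ := Nat.exists_eq_add_of_le (h1.trans hm)
    rw [add_comm 1 k]
    exact derives_alt_succ bar a k

lemma block_derives (hinv : Function.Involutive bar) :
    ∀ (l : List (ZMod q)) (a : ZMod q), (∀ b ∈ l, b = a ∨ b = bar a) →
      ∃ m, 1 ≤ m ∧ RCDerives bar 1 (a :: l) (alt bar a m)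
  | [], a, _ => ⟨1, le_refl 1, by simp [alt]; exact Relation.ReflTransGen.refl⟩
  | b :: l', a, hl => by
    have hb := hl b List.mem_cons_self
    have hl' : ∀ c ∈ l', c = a ∨ c = bar a := fun c hc => hl c (List.mem_cons_of_mem _ hc)
    rcases hb with hb | hb
    · -- b = a
      subst hb
      obtain ⟨m, hm1, hder⟩ := block_derives hinv l' b hl'
      obtain ⟨m', rfl⟩ := Nat.exists_eq_add_of_le hm1
      refine ⟨1 + m' + 2, by omega, ?_⟩
      have step1 : RCDerives bar 1 (b :: b :: l') (b :: alt bar b (1 + m')) := by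
        have := rcderives_compat bar [b] [] hder
        simpa using this
      refine step1.trans (Relation.ReflTransGen.single ?_)
      refine ⟨[], [b], alt bar b (1 + m'), rfl, by simp, ?_⟩
      show alt bar b (1 + m' + 2) = _
      have : alt bar b (1 + m' + 2) = b :: bar b :: alt bar b (1 + m') := by
        show b :: alt bar (bar b) (1 + m' + 1) = _
        show b :: bar b :: alt bar (bar (bar b)) (1 + m') = _
        rw [hinv b]
      rw [this]; simp
    · -- b = bar a
      subst hb
      have hl'' : ∀ c ∈ l', c = bar a ∨ c = bar (bar a) := by
        intro c hc
        rcases hl' c hc with h | h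
        · exact Or.inr (by rw [h, hinv])
        · exact Or.inl h
      obtain ⟨m, hm1, hder⟩ := block_derives hinv l' (bar a) hl''
      refine ⟨m + 1, by omega, ?_⟩
      have := rcderives_compat bar [a] [] hder
      simpa [alt] using this

lemma common_desc (hinv : Function.Involutive bar) :
    ∀ (x y : List (ZMod q)), signature bar x = signature bar y →
      ∃ z, RCDerives bar 1 x z ∧ RCDerives bar 1 y z
  | [], y, h => by
    have : y = [] := (sig_nil_iff bar y).mp (by rw [← h]; simp [signature])
    subst this
    exact ⟨[], Relation.ReflTransGen.refl, Relation.ReflTransGen.refl⟩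
  | a :: t, y, h => by
    cases y with
    | nil =>
      exfalso
      rw [sig_cons] at h
      simp [signature] at h
    | cons a' s =>
      rw [sig_cons, sig_cons] at h
      obtain ⟨ha, htails⟩ := List.cons.inj h
      subst ha
      -- recursive call on tails
      obtain ⟨z', hz1, hz2⟩ := common_desc hinv
        (t.dropWhile (fun b => b == a || b == bar a))
        (s.dropWhile (fun b => b == a || b == bar a)) htails
      -- blocks
      have hmemt : ∀ b ∈ t.takeWhile (fun b => b == a || b == bar a), b = a ∨ b = bar a := by
        intro b hb
        have := List.mem_takeWhile_imp hb
        simpa using this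
      have hmems : ∀ b ∈ s.takeWhile (fun b => b == a || b == bar a), b = a ∨ b = bar a := by
        intro b hb
        have := List.mem_takeWhile_imp hb
        simpa using this
      obtain ⟨m1, hm1, hd1⟩ := block_derives bar hinv _ a hmemt
      obtain ⟨m2, hm2, hd2⟩ := block_derives bar hinv _ a hmems
      set p := (fun b => b == a || b == bar a)
      refine ⟨alt bar a (max m1 m2) ++ z', ?_, ?_⟩
      · have hx : a :: t = (a :: t.takeWhile p) ++ t.dropWhile p := by
          simp [List.takeWhile_append_dropWhile]
        rw [hx]
        have d1 : RCDerives bar 1 ((a :: t.takeWhile p) ++ t.dropWhile p)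
            (alt bar a (max m1 m2) ++ t.dropWhile p) := by
          have := rcderives_compat bar [] (t.dropWhile p)
            (hd1.trans (derives_alt_le bar a hm1 (le_max_left m1 m2)))
          simpa using this
        have d2 : RCDerives bar 1 (alt bar a (max m1 m2) ++ t.dropWhile p)
            (alt bar a (max m1 m2) ++ z') := by
          have := rcderives_compat bar (alt bar a (max m1 m2)) [] hz1
          simpa using this
        exact d1.trans d2
      · have hy : a :: s = (a :: s.takeWhile p) ++ s.dropWhile p := by
          simp [List.takeWhile_append_dropWhile]
        rw [hy]
        have d1 : RCDerives bar 1 ((a :: s.takeWhile p) ++ s.dropWhile p)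
            (alt bar a (max m1 m2) ++ s.dropWhile p) := by
          have := rcderives_compat bar [] (s.dropWhile p)
            (hd2.trans (derives_alt_le bar a hm2 (le_max_right m1 m2)))
          simpa using this
        have d2 : RCDerives bar 1 (alt bar a (max m1 m2) ++ s.dropWhile p)
            (alt bar a (max m1 m2) ++ z') := by
          have := rcderives_compat bar (alt bar a (max m1 m2)) [] hz2
          simpa using this
        exact d1.trans d2
  termination_by x => x.length
  decreasing_by
    simp only [List.length_cons]
    exact Nat.lt_succ_of_le ((List.dropWhile_sublist _).length_le)

end Aux

/-- For `q ≥ 4` even, two nonempty `q`-ary strings have a common descendant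
under length-1 reverse-complement duplications iff they have the same signature. -/
theorem stmt5 {q : ℕ} (hq4 : 4 ≤ q) (hq : Even q) (bar : ZMod q → ZMod q)
    (hinv : Function.Involutive bar) (hfp : ∀ a, bar a ≠ a)
    (x y : List (ZMod q)) (hx : x ≠ []) (hy : y ≠ []) :
    (∃ z, RCDerives bar 1 x z ∧ RCDerives bar 1 y z) ↔
      signature bar x = signature bar y := by
  constructor
  · rintro ⟨z, hxz, hyz⟩
    rw [sig_derives bar hinv hxz, sig_derives bar hinv hyz]
  · intro h
    exact common_desc bar hinv x y h
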